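/- Let σ be an m-simplex in ℝⁿ with barycenter κ, diameter D (longest edge length) and shortest edge length s. Then for every point x of σ, ‖x − κ‖ ≤ (m/(m+1))·(D² − ((m−1)/(2m))·s²)^{1/2}. -/

import Mathlib

set_option maxHeartbeats 1000000

open Finset in
/-- Bound on the distance from any point of a simplex to its barycenter in terms of
the diameter D (longest edge) and the shortest edge length s. -/
theorem simplex_barycenter_point_bound (n m : ℕ) (hm : 0 < m) (D s : ℝ)
    (v : Fin (m + 1) → EuclideanSpace ℝ (Fin n))
    (hne : (Finset.univ.offDiag : Finset (Fin (m + 1) × Fin (m + 1))).Nonempty)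
    (hD : D = Finset.univ.offDiag.sup' hne fun pq => ‖v pq.1 - v pq.2‖)
    (hs : s = Finset.univ.offDiag.inf' hne fun pq => ‖v pq.1 - v pq.2‖)
    (κ : EuclideanSpace ℝ (Fin n)) (hκ : κ = ((m : ℝ) + 1)⁻¹ • ∑ j, v j) :
    ∀ x ∈ convexHull ℝ (Set.range v),
      ‖x - κ‖ ≤ ((m : ℝ) / ((m : ℝ) + 1)) *
        Real.sqrt (D ^ 2 - (((m : ℝ) - 1) / (2 * (m : ℝ))) * s ^ 2) := by
  have hm0 : (m : ℝ) ≠ 0 := Nat.cast_ne_zero.2 hm.ne'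
  have hm0' : (0:ℝ) ≤ (m:ℝ) := Nat.cast_nonneg m
  have hm1 : (0:ℝ) < (m:ℝ) + 1 := by positivity
  have hDub : ∀ p q : Fin (m+1), p ≠ q → ‖v p - v q‖ ≤ D := by
    intro p q h
    have hmem : (p, q) ∈ (Finset.univ.offDiag : Finset (Fin (m + 1) × Fin (m + 1))) := by
      simp [Finset.mem_offDiag, h]
    have := Finset.le_sup' (fun pq : Fin (m+1) × Fin (m+1) => ‖v pq.1 - v pq.2‖) hmem
    rw [hD]; exact this
  have hslb : ∀ p q : Fin (m+1), p ≠ q → s ≤ ‖v p - v q‖ := by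
    intro p q h
    have hmem : (p, q) ∈ (Finset.univ.offDiag : Finset (Fin (m + 1) × Fin (m + 1))) := by
      simp [Finset.mem_offDiag, h]
    have := Finset.inf'_le (fun pq : Fin (m+1) × Fin (m+1) => ‖v pq.1 - v pq.2‖) hmem
    rw [hs]; exact this
  have hs0 : 0 ≤ s := by
    rw [hs]; exact Finset.le_inf' hne _ fun pq _ => norm_nonneg _
  set S' : ℝ := (m:ℝ)^2 * D^2 - ((m:ℝ)*((m:ℝ)-1)/2) * s^2 with hS'def
  set r : ℝ := ((m : ℝ) / ((m : ℝ) + 1)) *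
      Real.sqrt (D ^ 2 - (((m : ℝ) - 1) / (2 * (m : ℝ))) * s ^ 2) with hrdef
  have key : ∀ i, ‖v i - κ‖ ≤ r := by
    intro i
    set J : Finset (Fin (m+1)) := Finset.univ.erase i with hJ
    have hcard : J.card = m := by
      simp [hJ, Finset.card_erase_of_mem, Finset.card_univ]
    have hsum_ext : ∑ j ∈ J, (v i - v j) = ∑ j : Fin (m+1), (v i - v j) := by
      apply Finset.sum_subset (Finset.subset_univ _)
      intro j _ hj
      have : j = i := by
        by_contra hji
        exact hj (Finset.mem_erase.2 ⟨hji, Finset.mem_univ _⟩)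
      simp [this]
    have hrep : v i - κ = ((m:ℝ)+1)⁻¹ • ∑ j ∈ J, (v i - v j) := by
      rw [hsum_ext, hκ, Finset.sum_sub_distrib, Finset.sum_const, Finset.card_univ,
        Fintype.card_fin, smul_sub]
      have : ((m:ℝ)+1)⁻¹ • ((m+1) • v i) = v i := by
        rw [← Nat.cast_smul_eq_nsmul ℝ, smul_smul]
        push_cast
        rw [inv_mul_cancel₀ hm1.ne', one_smul]
      rw [this]
      
    have expand : ‖∑ j ∈ J, (v i - v j)‖^2
        = ∑ j ∈ J, ∑ k ∈ J, (inner ℝ (v i - v j) (v i - v k) : ℝ) := by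
      rw [← real_inner_self_eq_norm_sq, sum_inner]
      congr 1
      ext j
      rw [inner_sum]
    have hnormsq : ‖∑ j ∈ J, (v i - v j)‖^2 ≤ S' := by
      rw [expand]
      have step : ∀ j ∈ J, ∀ k ∈ J,
          (inner ℝ (v i - v j) (v i - v k) : ℝ)
            ≤ (D^2 - s^2/2) + (if k = j then s^2/2 else 0) := by
        intro j hj k hk
        have hj' : j ≠ i := (Finset.mem_erase.1 hj).1
        have hk' : k ≠ i := (Finset.mem_erase.1 hk).1
        have h1 : ‖v i - v j‖ ≤ D := hDub _ _ (Ne.symm hj')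
        have h2 : ‖v i - v k‖ ≤ D := hDub _ _ (Ne.symm hk')
        have h1' : (0:ℝ) ≤ ‖v i - v j‖ := norm_nonneg _
        have h2' : (0:ℝ) ≤ ‖v i - v k‖ := norm_nonneg _
        rw [real_inner_eq_norm_mul_self_add_norm_mul_self_sub_norm_sub_mul_self_div_two]
        by_cases hjk : k = j
        · subst hjk
          simp only [if_true, sub_self, norm_zero]
          nlinarith
        · have h3 : s ≤ ‖v k - v j‖ := hslb _ _ hjk
          have heq : (v i - v j) - (v i - v k) = v k - v j := by abel
          rw [heq]
          simp only [hjk, if_false, add_zero]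
          nlinarith
      calc ∑ j ∈ J, ∑ k ∈ J, (inner ℝ (v i - v j) (v i - v k) : ℝ)
          ≤ ∑ j ∈ J, ∑ k ∈ J, ((D^2 - s^2/2) + (if k = j then s^2/2 else 0)) := by
            apply Finset.sum_le_sum
            intro j hj
            exact Finset.sum_le_sum (step j hj)
        _ = S' := by
            have : ∀ j ∈ J, ∑ k ∈ J, ((D^2 - s^2/2) + (if k = j then s^2/2 else 0))
                = (m:ℝ) * (D^2 - s^2/2) + s^2/2 := by
              intro j hj
              rw [Finset.sum_add_distrib, Finset.sum_const, hcard,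
                Finset.sum_ite_eq' J j (fun _ => s^2/2), if_pos hj]
              simp [nsmul_eq_mul]
            rw [Finset.sum_congr rfl this, Finset.sum_const, hcard, nsmul_eq_mul, hS'def]
            ring
    have hsqrt : ‖∑ j ∈ J, (v i - v j)‖ ≤ Real.sqrt S' := by
      rw [show Real.sqrt S' = Real.sqrt S' from rfl]
      have := Real.sqrt_le_sqrt hnormsq
      rwa [Real.sqrt_sq (norm_nonneg _)] at this
    have hS'eq : S' = (m:ℝ)^2 * (D^2 - (((m:ℝ)-1)/(2*(m:ℝ))) * s^2) := by
      field_simp [hS'def]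
      ring
    have hsqrtS' : Real.sqrt S' = (m:ℝ) * Real.sqrt (D^2 - (((m:ℝ)-1)/(2*(m:ℝ))) * s^2) := by
      rw [hS'eq, Real.sqrt_mul (sq_nonneg _), Real.sqrt_sq hm0']
    calc ‖v i - κ‖ = ((m:ℝ)+1)⁻¹ * ‖∑ j ∈ J, (v i - v j)‖ := by
          rw [hrep, norm_smul, Real.norm_eq_abs, abs_of_pos (inv_pos.2 hm1)]
      _ ≤ ((m:ℝ)+1)⁻¹ * Real.sqrt S' := by
          exact mul_le_mul_of_nonneg_left hsqrt (le_of_lt (inv_pos.2 hm1))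
      _ = r := by
          rw [hsqrtS', hrdef]
          ring
  intro x hx
  have hsub : convexHull ℝ (Set.range v) ⊆ Metric.closedBall κ r := by
    apply convexHull_min _ (convex_closedBall _ _)
    rintro _ ⟨i, rfl⟩
    rw [Metric.mem_closedBall, dist_eq_norm]
    exact key i
  have := hsub hx
  rwa [Metric.mem_closedBall, dist_eq_norm] at this
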